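/- Let (X,σ) be a shift space whose language 𝓛 admits a decomposition 𝓛 = 𝓒^p 𝓖 𝓒^s satisfying Conditions (I) and (II). Then for every δ > 0 there exists M ∈ ℕ such that #𝓖(M)_n ≥ (1 − δ) · #𝓛_n for all n ∈ ℕ. -/

import Mathlib

open MeasureTheory Filter Topology
open scoped ENNReal

/-- The full two-sided shift on `p` symbols. -/
abbrev FullShift (p : ℕ) : Type := ℤ → Fin p

/-- The left shift map. -/
def shiftMap {p : ℕ} : FullShift p → FullShift p := fun x n => x (n + 1)

/-- A (two-sided) shift space: a nonempty closed shift-invariant subset of the full shift. -/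
def IsShiftSpace {p : ℕ} (X : Set (FullShift p)) : Prop :=
  X.Nonempty ∧ IsClosed X ∧ shiftMap '' X = X

/-- `x` spells the word `w` starting at position `k`. -/
def spellsAt {p : ℕ} (x : FullShift p) (k : ℤ) (w : List (Fin p)) : Prop :=
  ∀ i : Fin w.length, x (k + (i : ℕ)) = w.get i

/-- The language of a shift space: all finite words occurring in its sequences. -/
def language {p : ℕ} (X : Set (FullShift p)) : Set (List (Fin p)) :=
  {w | ∃ x ∈ X, ∃ k : ℤ, spellsAt x k w}

/-- Words of length `n` in a collection `D`. -/
def wordsOfLen {p : ℕ} (D : Set (List (Fin p))) (n : ℕ) : Set (List (Fin p)) :=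
  {w ∈ D | w.length = n}

/-- Exponential growth rate `h(D) = limsup (1/n) log #D_n` of a collection of words. -/
noncomputable def growth {p : ℕ} (D : Set (List (Fin p))) : ℝ :=
  Filter.atTop.limsup fun n : ℕ => Real.log ((wordsOfLen D n).ncard) / n

/-- Topological entropy of a shift space (= the growth rate of its language). -/
noncomputable def htop {p : ℕ} (X : Set (FullShift p)) : ℝ := growth (language X)

/-- `glueWords m w v = w 0 ++ v 0 ++ w 1 ++ v 1 ++ ⋯ ++ v (m-1) ++ w m`. -/
def glueWords {p : ℕ} : ℕ → (ℕ → List (Fin p)) → (ℕ → List (Fin p)) → List (Fin p)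
  | 0, w, _ => w 0
  | (m + 1), w, v => glueWords m w v ++ v m ++ w (m + 1)

/-- (S)-specification on `G ⊆ L` with gap size `t`. -/
def HasSpecS {p : ℕ} (L G : Set (List (Fin p))) (t : ℕ) : Prop :=
  ∀ (m : ℕ) (w : ℕ → List (Fin p)), (∀ i ≤ m, w i ∈ G) →
    ∃ v : ℕ → List (Fin p), (∀ i < m, v i ∈ L ∧ (v i).length = t) ∧
      glueWords m w v ∈ L

/-- The central cylinder of a word `w`, starting at position `-⌊|w|/2⌋`. -/
def centralCylinder {p : ℕ} (w : List (Fin p)) : Set (FullShift p) :=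
  {x | spellsAt x (-((w.length / 2 : ℕ) : ℤ)) w}

/-- (Per)-specification on `G` with gap size `t`: the glued word can moreover be realized by
a periodic point of period exactly `|x| + t`. -/
def HasSpecPer {p : ℕ} (X : Set (FullShift p)) (G : Set (List (Fin p))) (t : ℕ) : Prop :=
  ∀ (m : ℕ) (w : ℕ → List (Fin p)), (∀ i ≤ m, w i ∈ G) →
    ∃ v : ℕ → List (Fin p), (∀ i < m, v i ∈ language X ∧ (v i).length = t) ∧
      glueWords m w v ∈ language X ∧
      ∃ z ∈ X, shiftMap^[(glueWords m w v).length + t] z = z ∧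
        z ∈ centralCylinder (glueWords m w v)

/-- A decomposition `L = 𝓒ᵖ 𝓖 𝓒ˢ` of a language. -/
def Decomp {p : ℕ} (L Cp G Cs : Set (List (Fin p))) : Prop :=
  Cp ⊆ L ∧ G ⊆ L ∧ Cs ⊆ L ∧
    ∀ w ∈ L, ∃ u v x, u ∈ Cp ∧ v ∈ G ∧ x ∈ Cs ∧ w = u ++ v ++ x

/-- `𝓖(M)`: words of `L` decomposable with prefix and suffix of length at most `M`. -/
def GM {p : ℕ} (L Cp G Cs : Set (List (Fin p))) (M : ℕ) : Set (List (Fin p)) :=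
  {w ∈ L | ∃ u v x, u ∈ Cp ∧ v ∈ G ∧ x ∈ Cs ∧ u.length ≤ M ∧ x.length ≤ M ∧ w = u ++ v ++ x}

/-- Condition (III): uniformly controlled extension of words of `𝓖(M)` to words of `𝓖`. -/
def CondIII {p : ℕ} (L Cp G Cs : Set (List (Fin p))) : Prop :=
  ∀ M : ℕ, ∃ τ : ℕ, ∀ v ∈ GM L Cp G Cs M,
    ∃ u w : List (Fin p), u.length ≤ τ ∧ w.length ≤ τ ∧ u ++ v ++ w ∈ G

/-- Shift invariance of a measure. -/
def ShiftInvariant {p : ℕ} (μ : Measure (FullShift p)) : Prop :=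
  Measure.map shiftMap μ = μ

/-- Measure-theoretic (Kolmogorov–Sinai) entropy of a shift-invariant measure, computed via
the generating partitions into cylinders of length `n`. -/
noncomputable def entropyOf {p : ℕ} (μ : Measure (FullShift p)) : ℝ :=
  Filter.atTop.liminf fun n : ℕ =>
    (∑ w : Fin n → Fin p,
      Real.negMulLog (μ {x : FullShift p | ∀ i : Fin n, x ((i : ℕ) : ℤ) = w i}).toReal) / n

/-- `μ` is a measure of maximal entropy for the shift space `X`. -/
def IsMME {p : ℕ} (X : Set (FullShift p)) (μ : Measure (FullShift p)) : Prop :=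
  IsProbabilityMeasure μ ∧ ShiftInvariant μ ∧ μ X = 1 ∧ entropyOf μ = htop X

/-- A shift space is intrinsically ergodic if it has exactly one measure of maximal entropy. -/
def IntrinsicallyErgodic {p : ℕ} (X : Set (FullShift p)) : Prop :=
  ∃! μ : Measure (FullShift p), IsMME X μ

/-- The set of points of `X` periodic of period at most `n`. -/
def PerN {p : ℕ} (X : Set (FullShift p)) (n : ℕ) : Set (FullShift p) :=
  {x ∈ X | ∃ k, 1 ≤ k ∧ k ≤ n ∧ shiftMap^[k] x = x}

/-- The measure evenly distributed on the periodic points of period at most `n`. -/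
noncomputable def perMeasure {p : ℕ} (X : Set (FullShift p)) (n : ℕ) :
    Measure (FullShift p) :=
  (((PerN X n).ncard : ℝ≥0∞))⁻¹ •
    Measure.sum (fun x : (PerN X n) => Measure.dirac (x : FullShift p))

/-- Weak* convergence of a sequence of measures. -/
def WeakStarLimit {p : ℕ} (μs : ℕ → Measure (FullShift p)) (μ : Measure (FullShift p)) : Prop :=
  ∀ f : C(FullShift p, ℝ),
    Tendsto (fun n => ∫ x, f x ∂(μs n)) atTop (𝓝 (∫ x, f x ∂μ))

/-- `Y` is a subshift factor of `X`. -/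
def IsSubshiftFactor {p q : ℕ} (X : Set (FullShift p)) (Y : Set (FullShift q)) : Prop :=
  IsShiftSpace Y ∧ ∃ π : FullShift p → FullShift q,
    Continuous π ∧ π '' X = Y ∧ ∀ x ∈ X, π (shiftMap x) = shiftMap (π x)

section Basic
variable {p : ℕ}

lemma wordsOfLen_finite (D : Set (List (Fin p))) (n : ℕ) : (wordsOfLen D n).Finite :=
  (List.finite_length_eq (Fin p) n).subset fun _ hw => hw.2

lemma ncard_wordsOfLen_mono {D E : Set (List (Fin p))} (h : D ⊆ E) (n : ℕ) :
    (wordsOfLen D n).ncard ≤ (wordsOfLen E n).ncard :=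
  Set.ncard_le_ncard (fun w hw => ⟨h hw.1, hw.2⟩) (wordsOfLen_finite E n)

lemma ncard_wordsOfLen_le_pow (D : Set (List (Fin p))) (n : ℕ) :
    (wordsOfLen D n).ncard ≤ (p + 1) ^ n := by
  have hinj : Function.Injective
      (fun w : (wordsOfLen D n) => (fun i : Fin n => (w : List (Fin p))[(i : ℕ)]?)) := by
    rintro ⟨w, hw⟩ ⟨w', hw'⟩ h
    ext1
    apply List.ext_getElem?
    intro i
    by_cases hi : i < n
    · exact congrFun h ⟨i, hi⟩
    · rw [List.getElem?_eq_none_iff.2, List.getElem?_eq_none_iff.2] <;> simp [hw.2, hw'.2] <;> omega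
  haveI : Finite (wordsOfLen D n) := (wordsOfLen_finite D n).to_subtype
  calc (wordsOfLen D n).ncard = Nat.card (wordsOfLen D n) :=
        (Nat.card_coe_set_eq (wordsOfLen D n)).symm
    _ ≤ Nat.card (Fin n → Option (Fin p)) := Nat.card_le_card_of_injective _ hinj
    _ = (p + 1) ^ n := by simp [Nat.card_eq_fintype_card]

end Basic

lemma ncard_prod' {α β : Type*} (s : Set α) (t : Set β) :
    (s ×ˢ t).ncard = s.ncard * t.ncard := by
  rw [← Nat.card_coe_set_eq, ← Nat.card_coe_set_eq, ← Nat.card_coe_set_eq,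
    ← Nat.card_prod]
  exact Nat.card_congr (Equiv.Set.prod s t)

section Lang
variable {p : ℕ}

lemma spellsAt_take {x : ℤ → Fin p} {k : ℤ} {w : List (Fin p)}
    (h : spellsAt x k w) (m : ℕ) : spellsAt x k (w.take m) := by
  intro i
  have hi : (i : ℕ) < w.length := lt_of_lt_of_le i.isLt (by simp)
  have := h ⟨i, hi⟩
  simpa [List.get_eq_getElem, List.getElem_take] using this

lemma spellsAt_drop {x : ℤ → Fin p} {k : ℤ} {w : List (Fin p)}
    (h : spellsAt x k w) (m : ℕ) : spellsAt x (k + m) (w.drop m) := by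
  intro i
  have hi : m + (i : ℕ) < w.length := by
    have := i.isLt; simp [List.length_drop] at this ⊢; omega
  have := h ⟨m + i, hi⟩
  simp only [List.get_eq_getElem] at this ⊢
  rw [List.getElem_drop, ← this]
  congr 1
  push_cast
  ring

end Lang


section Lang2
variable {p : ℕ} {X : Set (ℤ → Fin p)}

lemma take_mem_language {w : List (Fin p)} (h : w ∈ language X) (m : ℕ) :
    w.take m ∈ language X := by
  obtain ⟨x, hx, k, hk⟩ := h
  exact ⟨x, hx, k, spellsAt_take hk m⟩

lemma drop_mem_language {w : List (Fin p)} (h : w ∈ language X) (m : ℕ) :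
    w.drop m ∈ language X := by
  obtain ⟨x, hx, k, hk⟩ := h
  exact ⟨x, hx, k + m, spellsAt_drop hk m⟩

lemma wordsOfLen_language_nonempty (hX : X.Nonempty) (n : ℕ) :
    (wordsOfLen (language X) n).Nonempty := by
  obtain ⟨x, hx⟩ := hX
  refine ⟨List.ofFn (fun i : Fin n => x i), ⟨x, hx, 0, ?_⟩, by simp⟩
  intro i
  have hi : (i : ℕ) < n := lt_of_lt_of_le i.isLt (by simp)
  simp [List.get_ofFn]

lemma one_le_Lambda (hX : X.Nonempty) (n : ℕ) :
    1 ≤ (wordsOfLen (language X) n).ncard :=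
  (Set.ncard_pos (wordsOfLen_finite _ n)).2 (wordsOfLen_language_nonempty hX n)

lemma Lambda_submul (m n : ℕ) :
    (wordsOfLen (language X) (m + n)).ncard ≤
      (wordsOfLen (language X) m).ncard * (wordsOfLen (language X) n).ncard := by
  rw [← ncard_prod']
  refine Set.ncard_le_ncard_of_injOn (fun w => (w.take m, w.drop m)) ?_ ?_
    (((wordsOfLen_finite _ m)).prod ((wordsOfLen_finite _ n)))
  · rintro w ⟨hw, hlen⟩
    exact ⟨⟨take_mem_language hw m, by simp [hlen]⟩,
      ⟨drop_mem_language hw m, by simp [hlen]⟩⟩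
  · rintro w ⟨-, hw⟩ w' ⟨-, hw'⟩ h
    have h1 : w.take m = w'.take m := congrArg Prod.fst h
    have h2 : w.drop m = w'.drop m := congrArg Prod.snd h
    rw [← List.take_append_drop m w, ← List.take_append_drop m w', h1, h2]


lemma fekete_package {p : ℕ} {X : Set (ℤ → Fin p)} (hX : X.Nonempty) :
    0 ≤ growth (language X) ∧
    (∀ n : ℕ, Real.exp (growth (language X) * n) ≤ ((wordsOfLen (language X) n).ncard : ℝ)) ∧
    Tendsto (fun n : ℕ => Real.log ((wordsOfLen (language X) n).ncard) / n) atTop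
      (𝓝 (growth (language X))) := by
  set u : ℕ → ℝ := fun n => Real.log ((wordsOfLen (language X) n).ncard) with hu
  have hpos : ∀ n : ℕ, (1 : ℝ) ≤ ((wordsOfLen (language X) n).ncard : ℝ) := by
    intro n; exact_mod_cast one_le_Lambda hX n
  have hsub : Subadditive u := by
    intro m n
    have h1 : ((wordsOfLen (language X) (m + n)).ncard : ℝ) ≤
        ((wordsOfLen (language X) m).ncard : ℝ) * ((wordsOfLen (language X) n).ncard : ℝ) := by
      exact_mod_cast Lambda_submul m n
    calc u (m + n) ≤ Real.log (((wordsOfLen (language X) m).ncard : ℝ) *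
          ((wordsOfLen (language X) n).ncard : ℝ)) := by
          apply Real.log_le_log (lt_of_lt_of_le one_pos (hpos (m + n))) h1
      _ = u m + u n := Real.log_mul (by linarith [hpos m]) (by linarith [hpos n])
  have hbdd : BddBelow (Set.range fun n : ℕ => u n / n) := by
    refine ⟨0, ?_⟩
    rintro _ ⟨n, rfl⟩
    have : 0 ≤ u n := Real.log_nonneg (hpos n)
    positivity
  have htend := hsub.tendsto_lim hbdd
  have hgr : growth (language X) = hsub.lim := htend.limsup_eq
  rw [hgr]
  refine ⟨?_, ?_, htend⟩
  · refine ge_of_tendsto htend (Filter.Eventually.of_forall fun n => ?_)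
    have : 0 ≤ u n := Real.log_nonneg (hpos n)
    positivity
  · intro n
    rcases Nat.eq_zero_or_pos n with rfl | hn
    · simpa using hpos 0
    · have h1 : hsub.lim ≤ u n / n := hsub.lim_le_div hbdd hn.ne'
      have h2 : hsub.lim * n ≤ u n := by
        have := (le_div_iff₀ (by exact_mod_cast hn : (0:ℝ) < n)).1 h1
        linarith
      calc Real.exp (hsub.lim * n) ≤ Real.exp (u n) := Real.exp_le_exp.2 h2
        _ = _ := Real.exp_log (lt_of_lt_of_le one_pos (hpos n))


section Glue
variable {p : ℕ} {j t : ℕ} {w v : ℕ → List (Fin p)}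

lemma glueWords_length (m : ℕ) (hw : ∀ i ≤ m, (w i).length = j)
    (hv : ∀ i < m, (v i).length = t) :
    (glueWords m w v).length = (m + 1) * j + m * t := by
  induction m with
  | zero => simp [glueWords, hw 0 le_rfl]
  | succ m ih =>
    have h1 := ih (fun i hi => hw i (hi.trans (Nat.le_succ m)))
      (fun i hi => hv i (hi.trans (Nat.lt_succ_self m)))
    simp only [glueWords, List.length_append, h1, hw (m+1) le_rfl,
      hv m (Nat.lt_succ_self m)]
    ring

lemma take_drop_append {α : Type*} (l₁ l₂ : List α) (n k : ℕ) (h : n + k ≤ l₁.length) :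
    ((l₁ ++ l₂).drop n).take k = (l₁.drop n).take k := by
  rw [List.drop_append, List.take_append, List.length_drop,
    Nat.sub_eq_zero_of_le (by omega : k ≤ l₁.length - n), List.take_zero, List.append_nil]

lemma glueWords_extract (m : ℕ) (hw : ∀ i ≤ m, (w i).length = j)
    (hv : ∀ i < m, (v i).length = t) :
    ∀ i ≤ m, ((glueWords m w v).drop (i * (j + t))).take j = w i := by
  induction m with
  | zero =>
    intro i hi
    interval_cases i
    simp [glueWords, List.take_of_length_le (hw 0 le_rfl).le]
  | succ m ih =>
    intro i hi
    have hA : (glueWords m w v).length = (m + 1) * j + m * t :=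
      glueWords_length m (fun i hi => hw i (hi.trans (Nat.le_succ m)))
        (fun i hi => hv i (hi.trans (Nat.lt_succ_self m)))
    rcases Nat.lt_succ_iff_lt_or_eq.1 (Nat.lt_succ_of_le hi) with hi' | rfl
    · have hi'' := Nat.lt_succ_iff.1 hi'
      -- i ≤ m case
      have hle : i * (j + t) + j ≤ (glueWords m w v).length := by
        rw [hA]; nlinarith [Nat.lt_succ_iff.1 hi']
      have : glueWords (m+1) w v = glueWords m w v ++ (v m ++ w (m+1)) := by
        simp [glueWords]
      rw [this, take_drop_append _ _ _ _ hle]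
      exact ih (fun i hi => hw i (hi.trans (Nat.le_succ m)))
        (fun i hi => hv i (hi.trans (Nat.lt_succ_self m))) i hi''
    · -- i = m + 1
      have hlen : (glueWords m w v ++ v m).length = (m + 1) * (j + t) := by
        simp only [List.length_append, hA, hv m (Nat.lt_succ_self m)]
        ring
      show (((glueWords m w v ++ v m) ++ w (m+1)).drop ((m+1) * (j + t))).take j = w (m+1)
      rw [List.drop_left' hlen, List.take_of_length_le (hw (m+1) le_rfl).le]


lemma pow_le_Lambda {p : ℕ} {L G : Set (List (Fin p))} {t : ℕ}
    (hspec : HasSpecS L G t) (j m : ℕ) :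
    (wordsOfLen G j).ncard ^ (m + 1) ≤ (wordsOfLen L ((m + 1) * j + m * t)).ncard := by
  classical
  set N := (m + 1) * j + m * t with hN
  haveI : Finite (wordsOfLen L N) := (wordsOfLen_finite L N).to_subtype
  set wf : (Fin (m + 1) → (wordsOfLen G j)) → ℕ → List (Fin p) :=
    fun f i => if h : i < m + 1 then (f ⟨i, h⟩ : List (Fin p)) else [] with hwf
  have hmem : ∀ f, ∀ i ≤ m, wf f i ∈ G := by
    intro f i hi
    simp only [hwf, dif_pos (Nat.lt_succ_of_le hi)]
    exact (f ⟨i, Nat.lt_succ_of_le hi⟩).2.1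
  have hwlen : ∀ f, ∀ i ≤ m, (wf f i).length = j := by
    intro f i hi
    simp only [hwf, dif_pos (Nat.lt_succ_of_le hi)]
    exact (f ⟨i, Nat.lt_succ_of_le hi⟩).2.2
  have H : ∀ f : Fin (m + 1) → (wordsOfLen G j),
      ∃ v, (∀ i < m, v i ∈ L ∧ (v i).length = t) ∧ glueWords m (wf f) v ∈ L :=
    fun f => hspec m (wf f) (hmem f)
  choose V hV1 hV2 using H
  have hvlen : ∀ f, ∀ i < m, (V f i).length = t := fun f i hi => (hV1 f i hi).2
  set F : (Fin (m + 1) → (wordsOfLen G j)) → (wordsOfLen L N) :=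
    fun f => ⟨glueWords m (wf f) (V f), hV2 f,
      glueWords_length m (hwlen f) (hvlen f)⟩ with hF
  have hinjF : Function.Injective F := by
    intro f g hfg
    have hglue : glueWords m (wf f) (V f) = glueWords m (wf g) (V g) :=
      congrArg Subtype.val hfg
    funext i
    have hi : (i : ℕ) ≤ m := Nat.lt_succ_iff.1 i.isLt
    have e1 := glueWords_extract m (hwlen f) (hvlen f) i hi
    have e2 := glueWords_extract m (hwlen g) (hvlen g) i hi
    rw [hglue] at e1
    have : wf f i = wf g i := e1.symm.trans e2
    simp only [hwf, dif_pos i.isLt, Fin.eta] at this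
    exact Subtype.ext this
  calc (wordsOfLen G j).ncard ^ (m + 1)
      = Nat.card (Fin (m + 1) → (wordsOfLen G j)) := by
        rw [Nat.card_fun, Nat.card_coe_set_eq, Nat.card_eq_fintype_card, Fintype.card_fin]
    _ ≤ Nat.card (wordsOfLen L N) := Nat.card_le_card_of_injective F hinjF
    _ = (wordsOfLen L N).ncard := Nat.card_coe_set_eq _

lemma ncard_G_le {p : ℕ} {L G : Set (List (Fin p))} {t : ℕ} {h : ℝ}
    (hspec : HasSpecS L G t) (hh : 0 ≤ h)
    (htend : Tendsto (fun n : ℕ => Real.log ((wordsOfLen L n).ncard) / n) atTop (𝓝 h))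
    (j : ℕ) : ((wordsOfLen G j).ncard : ℝ) ≤ Real.exp (h * ((j : ℝ) + t)) := by
  set g : ℕ := (wordsOfLen G j).ncard with hg
  rcases Nat.eq_zero_or_pos g with hg0 | hg1
  · rw [hg0]; simp only [Nat.cast_zero]; exact (Real.exp_pos _).le
  rcases Nat.eq_zero_or_pos j with rfl | hj1
  · -- j = 0 : at most the empty word
    have hsub : wordsOfLen G 0 ⊆ {([] : List (Fin p))} := by
      rintro w ⟨-, hw⟩
      simp [List.length_eq_zero_iff.1 hw]
    have : g ≤ 1 := by
      simpa using Set.ncard_le_ncard hsub (Set.finite_singleton _)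
    calc (g : ℝ) ≤ 1 := by exact_mod_cast this
      _ ≤ Real.exp (h * ((0 : ℕ) + (t : ℝ))) := by
          rw [← Real.exp_zero]
          apply Real.exp_le_exp.2
          have ht0 : (0 : ℝ) ≤ ((0 : ℕ) : ℝ) + (t : ℝ) := by positivity
          exact mul_nonneg hh ht0
  -- main case : j ≥ 1, g ≥ 1
  set N : ℕ → ℕ := fun m => (m + 1) * j + m * t with hNdef
  have hNge : ∀ m, m + 1 ≤ N m := by intro m; simp only [hNdef]; nlinarith
  have hNcast : ∀ m : ℕ, (N m : ℝ) = ((m : ℝ) + 1) * ((j : ℝ) + t) - t := by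
    intro m; simp only [hNdef]; push_cast; ring
  have key : ∀ m : ℕ, ((m : ℝ) + 1) * Real.log g ≤
      Real.log ((wordsOfLen L (N m)).ncard) := by
    intro m
    have h1 : (g : ℝ) ^ (m + 1) ≤ ((wordsOfLen L (N m)).ncard : ℝ) := by
      exact_mod_cast pow_le_Lambda hspec j m
    have h2 : (0 : ℝ) < (g : ℝ) ^ (m + 1) := by positivity
    calc ((m : ℝ) + 1) * Real.log g = Real.log ((g : ℝ) ^ (m + 1)) := by
          rw [Real.log_pow]; push_cast; ring
      _ ≤ _ := Real.log_le_log h2 h1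
  have hNne : ∀ m : ℕ, ((N m : ℕ) : ℝ) ≠ 0 := by
    intro m
    have h1 := hNge m
    have : (0 : ℝ) < (N m : ℝ) := by exact_mod_cast Nat.lt_of_lt_of_le (Nat.succ_pos m) h1
    exact this.ne'
  -- the comparison sequence tends to h * (j + t)
  have htendN : Tendsto (fun m : ℕ => Real.log ((wordsOfLen L (N m)).ncard) / (N m)) atTop
      (𝓝 h) := by
    apply htend.comp
    apply Filter.tendsto_atTop_mono (fun m => (hNge m).trans' (Nat.le_succ m))
    exact Filter.tendsto_id
  have htendR : Tendsto (fun m : ℕ => ((N m : ℝ)) / ((m : ℝ) + 1)) atTop (𝓝 ((j : ℝ) + t)) := by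
    have h0 : Tendsto (fun m : ℕ => ((j : ℝ) + t) - (t : ℝ) * (1 / ((m : ℝ) + 1))) atTop
        (𝓝 (((j : ℝ) + t) - (t : ℝ) * 0)) :=
      tendsto_const_nhds.sub (tendsto_const_nhds.mul tendsto_one_div_add_atTop_nhds_zero_nat)
    rw [mul_zero, sub_zero] at h0
    apply h0.congr
    intro m
    have hm : ((m : ℝ) + 1) ≠ 0 := by positivity
    rw [hNcast m]
    field_simp
  have hprod : Tendsto
      (fun m : ℕ => (Real.log ((wordsOfLen L (N m)).ncard) / (N m)) * ((N m : ℝ) / ((m : ℝ) + 1)))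
      atTop (𝓝 (h * ((j : ℝ) + t))) := htendN.mul htendR
  have hle : ∀ m : ℕ, Real.log g ≤
      (Real.log ((wordsOfLen L (N m)).ncard) / (N m)) * ((N m : ℝ) / ((m : ℝ) + 1)) := by
    intro m
    have heq : (Real.log ((wordsOfLen L (N m)).ncard) / (N m)) * ((N m : ℝ) / ((m : ℝ) + 1)) =
        Real.log ((wordsOfLen L (N m)).ncard) / ((m : ℝ) + 1) := by
      rw [div_mul_div_comm, mul_comm (Real.log _) ((N m : ℝ))]
      exact mul_div_mul_left _ _ (hNne m)
    rw [heq, le_div_iff₀ (by positivity : (0 : ℝ) < (m : ℝ) + 1)]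
    have := key m
    linarith
  have hfin : Real.log g ≤ h * ((j : ℝ) + t) :=
    ge_of_tendsto hprod (Filter.Eventually.of_forall hle)
  calc (g : ℝ) = Real.exp (Real.log g) :=
        (Real.exp_log (by exact_mod_cast hg1)).symm
    _ ≤ _ := Real.exp_le_exp.2 hfin

lemma growth_bounded_aux {p : ℕ} (D : Set (List (Fin p))) (n : ℕ) :
    Real.log ((wordsOfLen D n).ncard) / n ≤ Real.log (p + 1) := by
  have hp1 : (1 : ℝ) ≤ (p : ℝ) + 1 := by
    have := Nat.cast_nonneg (α := ℝ) p; linarith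
  rcases Nat.eq_zero_or_pos n with rfl | hn
  · simpa using Real.log_nonneg hp1
  rcases Nat.eq_zero_or_pos (wordsOfLen D n).ncard with h0 | h1
  · rw [h0]
    simp only [Nat.cast_zero, Real.log_zero, zero_div]
    exact Real.log_nonneg hp1
  have hle : ((wordsOfLen D n).ncard : ℝ) ≤ ((p : ℝ) + 1) ^ n := by
    exact_mod_cast ncard_wordsOfLen_le_pow D n
  have hlog : Real.log ((wordsOfLen D n).ncard) ≤ n * Real.log (p + 1) := by
    calc Real.log ((wordsOfLen D n).ncard) ≤ Real.log (((p : ℝ) + 1) ^ n) :=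
          Real.log_le_log (by exact_mod_cast h1) hle
      _ = n * Real.log (p + 1) := by rw [Real.log_pow]
  rw [div_le_iff₀ (by exact_mod_cast hn : (0 : ℝ) < n)]
  linarith

lemma exists_B {p : ℕ} (D : Set (List (Fin p))) {lam : ℝ}
    (hlam : growth D < lam) (hlam0 : 0 ≤ lam) :
    ∃ B : ℝ, 1 ≤ B ∧ ∀ n : ℕ, ((wordsOfLen D n).ncard : ℝ) ≤ B * Real.exp (lam * n) := by
  have hbd : Filter.IsBoundedUnder (· ≤ ·) atTop
      (fun n : ℕ => Real.log ((wordsOfLen D n).ncard) / n) :=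
    Filter.isBoundedUnder_of ⟨Real.log (p + 1), fun n => growth_bounded_aux D n⟩
  have hev : ∀ᶠ n : ℕ in atTop, Real.log ((wordsOfLen D n).ncard) / n < lam :=
    Filter.eventually_lt_of_limsup_lt hlam hbd
  obtain ⟨N, hN⟩ := Filter.eventually_atTop.1 hev
  refine ⟨(∑ i ∈ Finset.range (N + 1), ((wordsOfLen D i).ncard : ℝ)) + 1, ?_, ?_⟩
  · have : (0 : ℝ) ≤ ∑ i ∈ Finset.range (N + 1), ((wordsOfLen D i).ncard : ℝ) :=
      Finset.sum_nonneg fun i _ => by positivity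
    linarith
  intro n
  set B : ℝ := (∑ i ∈ Finset.range (N + 1), ((wordsOfLen D i).ncard : ℝ)) + 1 with hB
  have hB1 : (1 : ℝ) ≤ B := by
    have : (0 : ℝ) ≤ ∑ i ∈ Finset.range (N + 1), ((wordsOfLen D i).ncard : ℝ) :=
      Finset.sum_nonneg fun i _ => by positivity
    simp only [hB]; linarith
  rcases le_or_gt n N with hn | hn
  · have h1 : ((wordsOfLen D n).ncard : ℝ) ≤ B := by
      have := Finset.single_le_sum (f := fun i => ((wordsOfLen D i).ncard : ℝ))
        (fun i _ => by positivity) (Finset.mem_range.2 (Nat.lt_succ_of_le hn))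
      simp only [hB]; linarith
    have h2 : (1 : ℝ) ≤ Real.exp (lam * n) := by
      rw [← Real.exp_zero]
      exact Real.exp_le_exp.2 (mul_nonneg hlam0 (Nat.cast_nonneg n))
    nlinarith [h1, h2]
  · have hlt := hN n hn.le
    rcases Nat.eq_zero_or_pos (wordsOfLen D n).ncard with h0 | h1
    · rw [h0]
      simp only [Nat.cast_zero]
      have := Real.exp_pos (lam * n)
      nlinarith [hB1]
    have hnpos : (0 : ℝ) < n := by
      exact_mod_cast Nat.lt_of_le_of_lt (Nat.zero_le N) hn
    have hlog : Real.log ((wordsOfLen D n).ncard) < lam * n := by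
      rw [div_lt_iff₀ hnpos] at hlt; linarith
    calc ((wordsOfLen D n).ncard : ℝ) = Real.exp (Real.log ((wordsOfLen D n).ncard)) :=
          (Real.exp_log (by exact_mod_cast h1)).symm
      _ ≤ Real.exp (lam * n) := Real.exp_le_exp.2 hlog.le
      _ ≤ B * Real.exp (lam * n) := le_mul_of_one_le_left (Real.exp_pos _).le hB1

lemma ncard_biUnion_le' {α ι : Type*} (P : Finset ι) (T : ι → Set α)
    (hfin : ∀ i, (T i).Finite) : (⋃ i ∈ P, T i).ncard ≤ ∑ i ∈ P, (T i).ncard := by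
  classical
  induction P using Finset.induction_on with
  | empty => simp
  | insert _ _ h ih =>
    rename_i a s
    rw [Finset.set_biUnion_insert, Finset.sum_insert h]
    exact (Set.ncard_union_le _ _).trans (add_le_add_right ih _)

lemma geom_sum_le_inv {r : ℝ} (h0 : 0 ≤ r) (h1 : r < 1) (n : ℕ) :
    ∑ i ∈ Finset.range n, r ^ i ≤ 1 / (1 - r) := by
  have hr : 0 < 1 - r := by linarith
  rw [le_div_iff₀ hr]
  have := geom_sum_mul r n
  have hp : (0:ℝ) ≤ r ^ n := by positivity
  nlinarith [this]

lemma log_div_nonneg {p : ℕ} (D : Set (List (Fin p))) (n : ℕ) :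
    0 ≤ Real.log ((wordsOfLen D n).ncard) / n := by
  apply div_nonneg _ (Nat.cast_nonneg n)
  exact Real.log_natCast_nonneg _

lemma growth_nonneg {p : ℕ} (D : Set (List (Fin p))) : 0 ≤ growth D := by
  apply Filter.le_limsup_of_frequently_le
  · exact Filter.Frequently.of_forall fun n => log_div_nonneg D n
  · exact Filter.isBoundedUnder_of ⟨Real.log (p + 1), fun n => growth_bounded_aux D n⟩

/-- **Lemma 5.5.** Under Conditions (I) and (II), for every `δ > 0` there is `M ∈ ℕ` such
that `#𝓖(M)_n ≥ (1 − δ) #𝓛_n` for all `n`. -/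
theorem card_GM_large {p : ℕ} (X : Set (FullShift p))
    (hX : IsShiftSpace X) (Cp G Cs : Set (List (Fin p)))
    (hdec : Decomp (language X) Cp G Cs)
    (hI : ∃ t : ℕ, HasSpecS (language X) G t)
    (hII : growth (Cp ∪ Cs) < htop X) :
    ∀ δ : ℝ, 0 < δ → ∃ M : ℕ, ∀ n : ℕ,
      (1 - δ) * ((wordsOfLen (language X) n).ncard : ℝ) ≤
        ((wordsOfLen (GM (language X) Cp G Cs M) n).ncard : ℝ) := by
  classical
  intro δ hδ
  obtain ⟨t, hspec⟩ := hI
  obtain ⟨hX0, -, -⟩ := hX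
  obtain ⟨hh0, hLlow, htend⟩ := fekete_package (X := X) hX0
  set h : ℝ := growth (language X) with hhdef
  have hII' : growth (Cp ∪ Cs) < h := hII
  set lam : ℝ := (growth (Cp ∪ Cs) + h) / 2 with hlamdef
  have hC0 : 0 ≤ growth (Cp ∪ Cs) := growth_nonneg _
  have hlam1 : growth (Cp ∪ Cs) < lam := by rw [hlamdef]; linarith
  have hlam2 : lam < h := by rw [hlamdef]; linarith
  have hlam0 : 0 ≤ lam := by rw [hlamdef]; linarith
  obtain ⟨B, hB1, hB⟩ := exists_B (Cp ∪ Cs) hlam1 hlam0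
  have hCp : ∀ n : ℕ, ((wordsOfLen Cp n).ncard : ℝ) ≤ B * Real.exp (lam * n) := fun n =>
    le_trans (by exact_mod_cast ncard_wordsOfLen_mono Set.subset_union_left n) (hB n)
  have hCs : ∀ n : ℕ, ((wordsOfLen Cs n).ncard : ℝ) ≤ B * Real.exp (lam * n) := fun n =>
    le_trans (by exact_mod_cast ncard_wordsOfLen_mono Set.subset_union_right n) (hB n)
  have hG : ∀ j : ℕ, ((wordsOfLen G j).ncard : ℝ) ≤ Real.exp (h * ((j : ℝ) + t)) :=
    fun j => ncard_G_le hspec hh0 htend j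
  set γ : ℝ := h - lam with hgdef
  have hγ : 0 < γ := by rw [hgdef]; linarith
  set r : ℝ := Real.exp (-(γ / 2)) with hrdef
  have hr0 : 0 < r := Real.exp_pos _
  have hr1 : r < 1 := by
    rw [hrdef, Real.exp_lt_one_iff]
    linarith
  set K : ℝ := 1 / (1 - r) with hKdef
  have hK0 : 0 < K := by
    have h1r : 0 < 1 - r := by linarith
    rw [hKdef]; positivity
  -- choose M
  have hto : Tendsto (fun m : ℕ => r ^ m) atTop (𝓝 0) :=
    tendsto_pow_atTop_nhds_zero_of_lt_one hr0.le hr1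
  have hepos : 0 < δ / (B ^ 2 * Real.exp (h * t) * K ^ 2) := by positivity
  obtain ⟨M, hM⟩ := Filter.eventually_atTop.1 (hto.eventually (gt_mem_nhds hepos))
  have hrM : B ^ 2 * Real.exp (h * t) * K ^ 2 * r ^ (M + 1) ≤ δ := by
    have h1 := hM (M + 1) (Nat.le_succ M)
    rw [lt_div_iff₀ (by positivity)] at h1
    nlinarith [h1]
  refine ⟨M, fun n => ?_⟩
  set L : Set (List (Fin p)) := language X with hLdef
  set Gn : Set (List (Fin p)) := wordsOfLen (GM L Cp G Cs M) n with hGndef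
  set Bad : Set (List (Fin p)) := wordsOfLen L n \ Gn with hBaddef
  set P : Finset (ℕ × ℕ) := (Finset.range (n + 1) ×ˢ Finset.range (n + 1)).filter
      (fun q => (M < q.1 ∨ M < q.2) ∧ q.1 + q.2 ≤ n) with hPdef
  set T : ℕ × ℕ → Set (List (Fin p)) := fun q =>
    (fun uvx : List (Fin p) × List (Fin p) × List (Fin p) =>
        uvx.1 ++ uvx.2.1 ++ uvx.2.2) ''
      ((wordsOfLen Cp q.1) ×ˢ (wordsOfLen G (n - q.1 - q.2)) ×ˢ (wordsOfLen Cs q.2)) with hTdef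
  have hTfin : ∀ q, (T q).Finite := fun q =>
    (((wordsOfLen_finite _ _)).prod
      (((wordsOfLen_finite _ _)).prod ((wordsOfLen_finite _ _)))).image _
  have hBadsub : Bad ⊆ ⋃ q ∈ P, T q := by
    rintro w ⟨⟨hwL, hwlen⟩, hwG⟩
    obtain ⟨u, v, x, hu, hv, hx, hweq⟩ := hdec.2.2.2 w hwL
    subst hweq
    have hlen : u.length + v.length + x.length = n := by
      have := hwlen; simp only [List.length_append] at this; omega
    have hMlt : M < u.length ∨ M < x.length := by
      by_contra hcon
      push_neg at hcon
      exact hwG ⟨⟨hwL, u, v, x, hu, hv, hx, hcon.1, hcon.2, rfl⟩, hwlen⟩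
    have hPm : (u.length, x.length) ∈ P := by
      simp only [hPdef, Finset.mem_filter, Finset.mem_product, Finset.mem_range]
      omega
    have hTm : u ++ v ++ x ∈ T (u.length, x.length) := by
      simp only [hTdef, Set.mem_image]
      exact ⟨(u, v, x), ⟨⟨hu, rfl⟩, ⟨⟨hv, show v.length = n - u.length - x.length by omega⟩, ⟨hx, rfl⟩⟩⟩, rfl⟩
    exact Set.mem_iUnion₂.2 ⟨(u.length, x.length), hPm, hTm⟩
  have hBadfin : Bad.Finite := (wordsOfLen_finite L n).subset Set.diff_subset
  have hBadcount : (Bad.ncard : ℝ) ≤ ∑ q ∈ P, ((T q).ncard : ℝ) := by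
    have h1 : Bad.ncard ≤ (⋃ q ∈ P, T q).ncard :=
      Set.ncard_le_ncard hBadsub (P.finite_toSet.biUnion fun q _ => hTfin q)
    have h2 := ncard_biUnion_le' P T hTfin
    exact_mod_cast h1.trans h2
  have hTq : ∀ q ∈ P, ((T q).ncard : ℝ) ≤
      B ^ 2 * Real.exp (h * t) * (r ^ (M + 1) * (r ^ q.1 * r ^ q.2)) * Real.exp (h * n) := by
    intro q hq
    simp only [hPdef, Finset.mem_filter, Finset.mem_product, Finset.mem_range] at hq
    obtain ⟨⟨hq1, hq2⟩, hqor, hqle⟩ := hq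
    have hcount : ((T q).ncard : ℝ) ≤
        ((wordsOfLen Cp q.1).ncard : ℝ) * (((wordsOfLen G (n - q.1 - q.2)).ncard : ℝ) *
          ((wordsOfLen Cs q.2).ncard : ℝ)) := by
      have := Set.ncard_image_le
        (f := fun uvx : List (Fin p) × List (Fin p) × List (Fin p) =>
          uvx.1 ++ uvx.2.1 ++ uvx.2.2)
        (s := (wordsOfLen Cp q.1) ×ˢ (wordsOfLen G (n - q.1 - q.2)) ×ˢ (wordsOfLen Cs q.2))
        (((wordsOfLen_finite _ _)).prod
          (((wordsOfLen_finite _ _)).prod ((wordsOfLen_finite _ _))))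
      rw [ncard_prod', ncard_prod'] at this
      exact_mod_cast this
    have hcast : ((n - q.1 - q.2 : ℕ) : ℝ) = (n : ℝ) - q.1 - q.2 := by
      push_cast [Nat.sub_sub]
      rw [Nat.cast_sub (by omega)]
      push_cast
      ring
    have hterm : ((wordsOfLen Cp q.1).ncard : ℝ) * (((wordsOfLen G (n - q.1 - q.2)).ncard : ℝ) *
          ((wordsOfLen Cs q.2).ncard : ℝ)) ≤
        (B * Real.exp (lam * q.1)) * ((Real.exp (h * (((n : ℝ) - q.1 - q.2) + t))) *
          (B * Real.exp (lam * q.2))) := by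
      have g1 := hCp q.1
      have g2 := hG (n - q.1 - q.2)
      rw [hcast] at g2
      have g3 := hCs q.2
      have n1 : (0 : ℝ) ≤ ((wordsOfLen Cp q.1).ncard : ℝ) := by positivity
      have n2 : (0 : ℝ) ≤ ((wordsOfLen G (n - q.1 - q.2)).ncard : ℝ) := by positivity
      have n3 : (0 : ℝ) ≤ ((wordsOfLen Cs q.2).ncard : ℝ) := by positivity
      have m1 : (0 : ℝ) ≤ B * Real.exp (lam * q.1) := by positivity
      have m2 : (0 : ℝ) ≤ Real.exp (h * (((n : ℝ) - q.1 - q.2) + t)) := by positivity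
      exact mul_le_mul g1 (mul_le_mul g2 g3 n3 m2) (by positivity) m1
    have hexp : (B * Real.exp (lam * q.1)) * ((Real.exp (h * (((n : ℝ) - q.1 - q.2) + t))) *
          (B * Real.exp (lam * q.2))) =
        B ^ 2 * Real.exp (h * t) * Real.exp (-(γ * (q.1 + q.2))) * Real.exp (h * n) := by
      rw [hgdef]
      have hkey : Real.exp (lam * ↑q.1) * Real.exp (h * (((n : ℝ) - ↑q.1 - ↑q.2) + ↑t)) *
          Real.exp (lam * ↑q.2) =
          Real.exp (h * ↑t) * Real.exp (-((h - lam) * (↑q.1 + ↑q.2))) * Real.exp (h * ↑n) := by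
        rw [← Real.exp_add, ← Real.exp_add, ← Real.exp_add, ← Real.exp_add]
        congr 1
        ring
      linear_combination (B ^ 2) * hkey
    have epow : Real.exp (-(γ * ((q.1 : ℝ) + q.2))) = r ^ (2 * (q.1 + q.2)) := by
      rw [hrdef, ← Real.exp_nat_mul]
      congr 1
      push_cast
      ring
    have hple : r ^ (2 * (q.1 + q.2)) ≤ r ^ (M + 1) * (r ^ q.1 * r ^ q.2) := by
      rw [← pow_add, ← pow_add]
      exact pow_le_pow_of_le_one hr0.le hr1.le (by omega)
    calc ((T q).ncard : ℝ) ≤ _ := hcount.trans hterm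
      _ = B ^ 2 * Real.exp (h * t) * Real.exp (-(γ * ((q.1 : ℝ) + q.2))) * Real.exp (h * n) :=
          hexp
      _ ≤ B ^ 2 * Real.exp (h * t) * (r ^ (M + 1) * (r ^ q.1 * r ^ q.2)) *
          Real.exp (h * n) := by
          rw [epow]
          gcongr
  -- summing up
  set C : ℝ := B ^ 2 * Real.exp (h * t) * r ^ (M + 1) * Real.exp (h * n) with hCdef
  have hC : 0 < C := by positivity
  have hsumP : ∑ q ∈ P, (r ^ q.1 * r ^ q.2) ≤ K * K := by
    have h1 : ∑ q ∈ P, (r ^ q.1 * r ^ q.2) ≤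
        ∑ q ∈ Finset.range (n + 1) ×ˢ Finset.range (n + 1), (r ^ q.1 * r ^ q.2) := by
      apply Finset.sum_le_sum_of_subset_of_nonneg
      · rw [hPdef]; exact Finset.filter_subset _ _
      · intro q _ _; positivity
    have h2 : ∑ q ∈ Finset.range (n + 1) ×ˢ Finset.range (n + 1), (r ^ q.1 * r ^ q.2) =
        (∑ i ∈ Finset.range (n + 1), r ^ i) * (∑ j ∈ Finset.range (n + 1), r ^ j) := by
      rw [Finset.sum_mul_sum]
      rw [Finset.sum_product]
    have h3 : (∑ i ∈ Finset.range (n + 1), r ^ i) ≤ K := by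
      rw [hKdef]; exact geom_sum_le_inv hr0.le hr1 (n + 1)
    have h4 : (0 : ℝ) ≤ ∑ i ∈ Finset.range (n + 1), r ^ i :=
      Finset.sum_nonneg fun i _ => by positivity
    calc ∑ q ∈ P, (r ^ q.1 * r ^ q.2) ≤ _ := h1
      _ = _ := h2
      _ ≤ K * K := mul_le_mul h3 h3 h4 hK0.le
  have hBadle : (Bad.ncard : ℝ) ≤ C * (K * K) := by
    calc (Bad.ncard : ℝ) ≤ ∑ q ∈ P, ((T q).ncard : ℝ) := hBadcount
      _ ≤ ∑ q ∈ P, (B ^ 2 * Real.exp (h * t) * (r ^ (M + 1) * (r ^ q.1 * r ^ q.2)) *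
          Real.exp (h * n)) := Finset.sum_le_sum hTq
      _ = ∑ q ∈ P, (C * (r ^ q.1 * r ^ q.2)) := by
          apply Finset.sum_congr rfl
          intro q _
          rw [hCdef]; ring
      _ = C * ∑ q ∈ P, (r ^ q.1 * r ^ q.2) := by rw [Finset.mul_sum]
      _ ≤ C * (K * K) := mul_le_mul_of_nonneg_left hsumP hC.le
  have hBadexp : (Bad.ncard : ℝ) ≤ δ * Real.exp (h * n) := by
    have : C * (K * K) = (B ^ 2 * Real.exp (h * t) * K ^ 2 * r ^ (M + 1)) * Real.exp (h * n) := by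
      rw [hCdef]; ring
    rw [this] at hBadle
    have hexp0 : (0 : ℝ) ≤ Real.exp (h * n) := (Real.exp_pos _).le
    nlinarith [hrM, hexp0]
  have hBadfinal : (Bad.ncard : ℝ) ≤ δ * ((wordsOfLen L n).ncard : ℝ) :=
    hBadexp.trans (mul_le_mul_of_nonneg_left (hLlow n) hδ.le)
  have hcover : wordsOfLen L n ⊆ Gn ∪ Bad := fun w hw =>
    (em (w ∈ Gn)).elim Or.inl fun hne => Or.inr ⟨hw, hne⟩
  have hLle : ((wordsOfLen L n).ncard : ℝ) ≤ (Gn.ncard : ℝ) + (Bad.ncard : ℝ) := by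
    have h1 : (wordsOfLen L n).ncard ≤ (Gn ∪ Bad).ncard :=
      Set.ncard_le_ncard hcover ((wordsOfLen_finite _ n).union hBadfin)
    have h2 := Set.ncard_union_le Gn Bad
    exact_mod_cast h1.trans h2
  linarith [hLle, hBadfinal]
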